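/- (De Bruijn identity) Let n ≥ 1 and let φ_1, …, φ_{2n} be integrable functions on a measure space (C, μ), and let S(x,y) be an antisymmetric kernel such that all the iterated integrals below converge absolutely. Then ∫⋯∫ ∏_{ℓ=1}^{2n} φ_ℓ(X_ℓ) dμ(X_1)⋯dμ(X_{2n}) · Pf[S(X_i, X_j)]_{i,j=1}^{2n} = Pf[ ∫∫ φ_i(v) φ_j(w) S(v,w) dμ(v) dμ(w) ]_{i,j=1}^{2n}. -/

import Mathlib

open MeasureTheory BigOperators

/-- The Pfaffian of a 2n×2n matrix:
`Pf[A] = (1/(2^n n!)) Σ_{σ ∈ S_{2n}} sgn(σ) ∏_{k=1}^n A_{σ(2k-1),σ(2k)}`. -/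
noncomputable def Pf {n : ℕ} (A : Matrix (Fin (2 * n)) (Fin (2 * n)) ℝ) : ℝ :=
  (1 / ((2 : ℝ) ^ n * n.factorial)) *
    ∑ σ : Equiv.Perm (Fin (2 * n)),
      ((Equiv.Perm.sign σ : ℤ) : ℝ) *
        ∏ k : Fin n,
          A (σ ⟨2 * (k : ℕ), by have := k.isLt; omega⟩)
            (σ ⟨2 * (k : ℕ) + 1, by have := k.isLt; omega⟩)

def deBruijnSumEquiv (n : ℕ) : Fin n ⊕ Fin n ≃ Fin (2 * n) where
  toFun := Sum.elim (fun k => ⟨2 * (k : ℕ), by have := k.isLt; omega⟩)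
    (fun k => ⟨2 * (k : ℕ) + 1, by have := k.isLt; omega⟩)
  invFun x := if h : (x : ℕ) % 2 = 0 then Sum.inl ⟨(x : ℕ) / 2, by have := x.isLt; omega⟩
    else Sum.inr ⟨(x : ℕ) / 2, by have := x.isLt; omega⟩
  left_inv := by
    rintro (⟨k, hk⟩ | ⟨k, hk⟩) <;> simp only [Sum.elim_inl, Sum.elim_inr] <;>
      split_ifs <;> simp <;> omega
  right_inv := by
    rintro ⟨x, hx⟩
    dsimp only
    split_ifs with h <;> simp <;> omega

theorem deBruijn_key {C : Type*} [MeasurableSpace C] (μ : Measure C) [SigmaFinite μ]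
    {n : ℕ} (e : Fin n ⊕ Fin n ≃ Fin (2 * n)) (g : Fin n → C → C → ℝ)
    (hg : ∀ k, Integrable (fun p : C × C => g k p.1 p.2) (μ.prod μ)) :
    Integrable (fun X : Fin (2 * n) → C => ∏ k, g k (X (e (.inl k))) (X (e (.inr k))))
      (Measure.pi fun _ => μ) ∧
    (∫ X : Fin (2 * n) → C, ∏ k, g k (X (e (.inl k))) (X (e (.inr k)))
        ∂(Measure.pi fun _ => μ)
      = ∏ k, ∫ v, ∫ w, g k v w ∂μ ∂μ) := by
  letI : MeasureSpace (C × C) := ⟨μ.prod μ⟩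
  haveI : SigmaFinite (volume : Measure (C × C)) := by
    show SigmaFinite (μ.prod μ); infer_instance
  let T : (Fin n → C × C) ≃ᵐ (Fin (2 * n) → C) :=
    (MeasurableEquiv.arrowProdEquivProdArrow C C (Fin n)).trans
      (((MeasurableEquiv.sumPiEquivProdPi (fun _ : Fin n ⊕ Fin n => C)).symm).trans
        (MeasurableEquiv.piCongrLeft (fun _ => C) e))
  have hT : MeasurePreserving T (Measure.pi fun _ => μ.prod μ)
      (Measure.pi fun _ : Fin (2 * n) => μ) := by
    have h1 := measurePreserving_arrowProdEquivProdArrow C C (Fin n) (fun _ => μ) (fun _ => μ)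
    have h2 := measurePreserving_sumPiEquivProdPi_symm (fun _ : Fin n ⊕ Fin n => μ)
    have h3 := measurePreserving_piCongrLeft (fun _ : Fin (2 * n) => μ) e
    exact (h3.comp (h2.comp h1))
  have hTapp : ∀ (W : Fin n → C × C) (k : Fin n),
      (T W) (e (.inl k)) = (W k).1 ∧ (T W) (e (.inr k)) = (W k).2 := by
    intro W k
    constructor <;>
    · show (Equiv.piCongrLeft (fun _ => C) e) _ (e _) = _
      rw [Equiv.piCongrLeft_apply_apply]
      rfl
  have hcomp : ((fun X : Fin (2 * n) → C => ∏ k, g k (X (e (.inl k))) (X (e (.inr k)))) ∘ T)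
      = fun W : Fin n → C × C => ∏ k, g k (W k).1 (W k).2 := by
    funext W
    exact Finset.prod_congr rfl fun k _ => by rw [(hTapp W k).1, (hTapp W k).2]
  have hint : Integrable (fun W : Fin n → C × C => ∏ k, g k (W k).1 (W k).2)
      (Measure.pi fun _ => μ.prod μ) :=
    Integrable.fintype_prod (f := fun k (p : C × C) => g k p.1 p.2) hg
  constructor
  · rw [← hT.integrable_comp_emb T.measurableEmbedding, hcomp]
    exact hint
  · rw [← hT.integral_comp']
    calc ∫ W : Fin n → C × C, ∏ k, g k ((T W) (e (.inl k))) ((T W) (e (.inr k)))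
          ∂(Measure.pi fun _ => μ.prod μ)
        = ∫ W : Fin n → C × C, ∏ k, g k (W k).1 (W k).2 ∂(Measure.pi fun _ => μ.prod μ) :=
          integral_congr_ae (Filter.Eventually.of_forall fun W => congrFun hcomp W)
      _ = ∏ k, ∫ p : C × C, g k p.1 p.2 ∂(μ.prod μ) :=
          integral_fintype_prod_eq_prod (fun k (p : C × C) => g k p.1 p.2)
      _ = ∏ k, ∫ v, ∫ w, g k v w ∂μ ∂μ :=
          Finset.prod_congr rfl fun k _ => integral_prod _ (hg k)


/-- De Bruijn's identity: integrating a product of functions against the Pfaffian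
of an antisymmetric kernel yields the Pfaffian of the matrix of double integrals. -/
theorem de_bruijn {C : Type*} [MeasurableSpace C] (μ : Measure C) [SigmaFinite μ]
    (n : ℕ) (hn : 1 ≤ n) (φ : Fin (2 * n) → C → ℝ)
    (hφ : ∀ i, Integrable (φ i) μ)
    (S : C → C → ℝ)
    (hS : ∀ x y, S x y = -S y x)
    (hL : Integrable
      (fun X : Fin (2 * n) → C =>
        (∏ ℓ, φ ℓ (X ℓ)) * Pf (Matrix.of fun i j => S (X i) (X j)))
      (Measure.pi fun _ => μ))
    (hR : ∀ i j, Integrable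
      (fun p : C × C => φ i p.1 * φ j p.2 * S p.1 p.2) (μ.prod μ)) :
    (∫ X : Fin (2 * n) → C,
        (∏ ℓ, φ ℓ (X ℓ)) * Pf (Matrix.of fun i j => S (X i) (X j))
        ∂(Measure.pi fun _ => μ)) =
      Pf (Matrix.of fun i j => ∫ v, ∫ w, φ i v * φ j w * S v w ∂μ ∂μ) := by
  classical
  set c : ℝ := 1 / ((2 : ℝ) ^ n * n.factorial) with hc
  set e : Equiv.Perm (Fin (2 * n)) → (Fin n ⊕ Fin n ≃ Fin (2 * n)) :=
    fun σ => (deBruijnSumEquiv n).trans σ with he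
  set g : Equiv.Perm (Fin (2 * n)) → Fin n → C → C → ℝ := fun σ k v w =>
    φ (e σ (.inl k)) v * φ (e σ (.inr k)) w * S v w with hgdef
  have hg : ∀ σ k, Integrable (fun p : C × C => g σ k p.1 p.2) (μ.prod μ) :=
    fun σ k => hR _ _
  have hkey := fun σ => deBruijn_key μ (e σ) (g σ) (hg σ)
  have integrand_eq : ∀ X : Fin (2 * n) → C,
      (∏ ℓ, φ ℓ (X ℓ)) * Pf (Matrix.of fun i j => S (X i) (X j))
        = ∑ σ : Equiv.Perm (Fin (2 * n)), (c * ((Equiv.Perm.sign σ : ℤ) : ℝ)) *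
            ∏ k, g σ k (X (e σ (.inl k))) (X (e σ (.inr k))) := by
    intro X
    simp only [Pf, Matrix.of_apply, Finset.mul_sum, ← hc]
    refine Finset.sum_congr rfl fun σ _ => ?_
    have hprod : (∏ ℓ, φ ℓ (X ℓ)) *
        ∏ k : Fin n, S (X (σ ⟨2 * (k : ℕ), by have := k.isLt; omega⟩))
          (X (σ ⟨2 * (k : ℕ) + 1, by have := k.isLt; omega⟩))
        = ∏ k, g σ k (X (e σ (.inl k))) (X (e σ (.inr k))) := by
      have h1 : (∏ ℓ, φ ℓ (X ℓ)) = ∏ j : Fin n ⊕ Fin n, φ (e σ j) (X (e σ j)) :=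
        (Equiv.prod_comp (e σ) fun i => φ i (X i)).symm
      rw [h1, Fintype.prod_sum_type, ← Finset.prod_mul_distrib, ← Finset.prod_mul_distrib]
      exact Finset.prod_congr rfl fun k _ => rfl
    rw [← hprod]
    ring
  simp only [integrand_eq]
  rw [integral_finset_sum _ (fun σ _ => ((hkey σ).1.const_mul _))]
  have step : ∀ σ : Equiv.Perm (Fin (2 * n)),
      ∫ X : Fin (2 * n) → C, (c * ((Equiv.Perm.sign σ : ℤ) : ℝ)) *
          ∏ k, g σ k (X (e σ (.inl k))) (X (e σ (.inr k))) ∂(Measure.pi fun _ => μ)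
        = (c * ((Equiv.Perm.sign σ : ℤ) : ℝ)) * ∏ k, ∫ v, ∫ w, g σ k v w ∂μ ∂μ := by
    intro σ
    rw [integral_const_mul, (hkey σ).2]
  simp only [step]
  simp only [Pf, Matrix.of_apply, Finset.mul_sum, ← hc]
  exact Finset.sum_congr rfl fun σ _ => mul_assoc _ _ _
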